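/- The monomials A_{i,s} are multiplicatively independent: if v : I × ℤ → ℤ is finitely supported and ∑_{(i,s) ∈ I × ℤ} v(i,s)·A_{i,s} = 0 as a function on I × ℤ, then v = 0. (This is the invertibility statement making the exponents v_{i,s}(m, m'), defined by m = m' − ∑ v(i,s)·A_{i,s}, well defined.) -/
import Mathlib


open Finsupp

/-- The exponent function of the monomial
`A_{i,q^s} = Y_{i,q^{s+1}} Y_{i,q^{s-1}} ∏_{j ≠ i} Y_{j,q^s}^{C j i}`:
value `1` at `(i, s+1)` and `(i, s-1)`, value `C j i` at `(j, s)` for `j ≠ i`,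
and `0` elsewhere. -/
noncomputable def Amon {I : Type*} [Fintype I] [DecidableEq I]
    (C : I → I → ℤ) (i : I) (s : ℤ) : (I × ℤ) →₀ ℤ :=
  Finsupp.single (i, s + 1) 1 + Finsupp.single (i, s - 1) 1 +
    ∑ j ∈ Finset.univ.erase i, Finsupp.single (j, s) (C j i)

lemma Amon_apply_top {I : Type*} [Fintype I] [DecidableEq I]
    (C : I → I → ℤ) (j : I) (t : ℤ) (i : I) (s : ℤ) (ht : t ≤ s) :
    Amon C j t (i, s + 1) = if j = i ∧ t = s then 1 else 0 := by
  have h1 : t - 1 ≠ s + 1 := by omega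
  have h2 : t ≠ s + 1 := by omega
  simp only [Amon, Finsupp.add_apply, Finsupp.finset_sum_apply, Finsupp.single_apply,
    Prod.mk.injEq]
  rw [Finset.sum_eq_zero (fun j' _ => by simp [h2])]
  by_cases hj : j = i <;> by_cases hts : t = s + 1 - 1 <;>
    simp_all <;> omega

/-- The monomials `A_{i,s}` are multiplicatively independent: if a finitely
supported integral combination of them vanishes, all the coefficients vanish. -/
theorem Amon_independent {I : Type*} [Fintype I] [DecidableEq I]
    (C : I → I → ℤ)
    (hsym : ∀ i j, C i j = C j i)
    (hdiag : ∀ i, C i i = 2)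
    (hoff : ∀ i j, i ≠ j → C i j = 0 ∨ C i j = -1)
    (v : (I × ℤ) →₀ ℤ)
    (hv : (v.sum fun p n => n • Amon C p.1 p.2) = 0) :
    v = 0 := by
  by_contra hne
  have hsupp : v.support.Nonempty := Finsupp.support_nonempty_iff.2 hne
  have himg : (v.support.image Prod.snd).Nonempty := hsupp.image _
  set s₀ := (v.support.image Prod.snd).max' himg with hs₀
  obtain ⟨p, hp, hp2⟩ := Finset.mem_image.1 ((v.support.image Prod.snd).max'_mem himg)
  obtain ⟨i, s⟩ := p
  have hs : s = s₀ := hp2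
  subst hs
  have hle : ∀ q ∈ v.support, q.2 ≤ s₀ :=
    fun q hq => Finset.le_max' _ _ (Finset.mem_image_of_mem Prod.snd hq)
  have h0 : (v.sum fun p n => n • Amon C p.1 p.2) (i, s₀ + 1) = 0 := by rw [hv]; rfl
  rw [Finsupp.sum_apply, Finsupp.sum] at h0
  have h1 : ∀ q ∈ v.support, (v q • Amon C q.1 q.2) (i, s₀ + 1)
      = if q = (i, s₀) then v q else 0 := by
    rintro ⟨j, t⟩ hq
    rw [Finsupp.smul_apply, Amon_apply_top C j t i s₀ (hle _ hq)]
    simp [Prod.ext_iff, and_comm]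
  rw [Finset.sum_congr rfl h1, Finset.sum_ite_eq' v.support (i, s₀) v] at h0
  simp [hp] at h0
  exact Finsupp.mem_support_iff.1 hp h0
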